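/- Let φ : ℝ → ℝ be continuously differentiable with compact support. Then for every x1 ∈ ℝ and every fixed x3 ∈ ℝ, the function (ξ1, ξ3) ↦ (x1−ξ1) φ′(ξ1) / ( (x1−ξ1)² + (x3−ξ3)² ) is Lebesgue integrable on ℝ², and ∫_{ℝ²} (x1−ξ1) φ′(ξ1) / ( (x1−ξ1)² + (x3−ξ3)² ) dξ1 dξ3 = 2π φ(x1). -/

import Mathlib

open MeasureTheory Filter Real Set

lemma kfun_eq {a : ℝ} (ha : a ≠ 0) :
    (fun t : ℝ => a / (a ^ 2 + t ^ 2)) = fun t : ℝ => a⁻¹ * (1 + (a⁻¹ * t) ^ 2)⁻¹ := by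
  funext t
  have h1 : a ^ 2 + t ^ 2 ≠ 0 := by positivity
  have h2 : 1 + (a⁻¹ * t) ^ 2 ≠ 0 := by positivity
  field_simp

lemma kint (a : ℝ) : Integrable (fun t : ℝ => a / (a ^ 2 + t ^ 2)) := by
  rcases eq_or_ne a 0 with rfl | ha
  · simpa using integrable_zero ℝ ℝ (volume : Measure ℝ)
  · rw [kfun_eq ha]
    exact (integrable_inv_one_add_sq.comp_mul_left' (inv_ne_zero ha)).const_mul a⁻¹

lemma kval (a : ℝ) : (∫ t : ℝ, a / (a ^ 2 + t ^ 2)) = π * (a⁻¹ * |a|) := by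
  rcases eq_or_ne a 0 with rfl | ha
  · simp
  · rw [kfun_eq ha, integral_const_mul _ _,
      MeasureTheory.Measure.integral_comp_mul_left (fun x : ℝ => (1 + x ^ 2)⁻¹) a⁻¹,
      integral_univ_inv_one_add_sq]
    simp only [inv_inv, smul_eq_mul, abs_inv]
    ring

lemma kval_abs {a : ℝ} (ha : a ≠ 0) : (∫ t : ℝ, |a| / (a ^ 2 + t ^ 2)) = π := by
  have := kval |a|
  rw [sq_abs] at this
  rw [this, abs_abs, inv_mul_cancel₀ (abs_ne_zero.2 ha), mul_one]

lemma sfac_abs_le (a : ℝ) : abs (a⁻¹ * |a|) ≤ 1 := by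
  rcases eq_or_ne a 0 with rfl | ha
  · simp
  · rw [abs_mul, abs_inv, abs_abs, inv_mul_cancel₀ (abs_ne_zero.2 ha)]

/-- Specialisation of the planar identity `Q₁(∂φ/∂x₁) + Q₃(∂φ/∂x₃) = 2φ` to a `C¹`
compactly-supported function `φ` of `x₁` only: the kernel `(x₁-ξ₁)/((x₁-ξ₁)²+(x₃-ξ₃)²)`
convolved (over the plane) with `φ'` gives `2π φ(x₁)`. -/
theorem stmt3 (φ : ℝ → ℝ) (hφ : ContDiff ℝ 1 φ) (hsupp : HasCompactSupport φ)
    (x1 x3 : ℝ) :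
    Integrable (fun ξ : ℝ × ℝ =>
      (x1 - ξ.1) * deriv φ ξ.1 / ((x1 - ξ.1) ^ 2 + (x3 - ξ.2) ^ 2)) ∧
    (∫ ξ : ℝ × ℝ, (x1 - ξ.1) * deriv φ ξ.1 / ((x1 - ξ.1) ^ 2 + (x3 - ξ.2) ^ 2)) =
      2 * Real.pi * φ x1 := by
  have hd : Continuous (deriv φ) := hφ.continuous_deriv le_rfl
  have hdint : Integrable (deriv φ) := hd.integrable_of_hasCompactSupport hsupp.deriv
  set f : ℝ × ℝ → ℝ := fun ξ =>
    (x1 - ξ.1) * deriv φ ξ.1 / ((x1 - ξ.1) ^ 2 + (x3 - ξ.2) ^ 2) with hf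
  -- measurability
  have hmeas : AEStronglyMeasurable f (volume : Measure (ℝ × ℝ)) := by
    apply Measurable.aestronglyMeasurable
    exact (((continuous_const.sub continuous_fst).mul
        (hd.comp continuous_fst)).measurable).div
      (((continuous_const.sub continuous_fst).pow 2).add
        ((continuous_const.sub continuous_snd).pow 2)).measurable
  -- slices
  have hslice_eq : ∀ ξ1 : ℝ, (fun ξ3 : ℝ => f (ξ1, ξ3)) =
      fun ξ3 : ℝ => deriv φ ξ1 * ((x1 - ξ1) / ((x1 - ξ1) ^ 2 + (x3 - ξ3) ^ 2)) := by
    intro ξ1; funext ξ3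
    simp only [hf]
    rw [mul_comm (x1 - ξ1) (deriv φ ξ1), mul_div_assoc]
  have hslice : ∀ ξ1 : ℝ, Integrable (fun ξ3 : ℝ => f (ξ1, ξ3)) := by
    intro ξ1
    rw [hslice_eq ξ1]
    exact ((kint (x1 - ξ1)).comp_sub_left x3).const_mul _
  -- a.e. ξ1 ≠ x1
  have hae : ∀ᵐ ξ1 : ℝ, ξ1 ≠ x1 := by
    rw [ae_iff]
    simpa using Real.volume_singleton (a := x1)
  -- norm integrals
  have hnorm : (fun ξ1 : ℝ => ∫ ξ3 : ℝ, ‖f (ξ1, ξ3)‖) =ᵐ[volume]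
      fun ξ1 : ℝ => π * |deriv φ ξ1| := by
    filter_upwards [hae] with ξ1 hne
    have ha : x1 - ξ1 ≠ 0 := sub_ne_zero.2 (Ne.symm hne)
    have heq : (fun ξ3 : ℝ => ‖f (ξ1, ξ3)‖) =
        fun ξ3 : ℝ => |deriv φ ξ1| * (|x1 - ξ1| / ((x1 - ξ1) ^ 2 + (x3 - ξ3) ^ 2)) := by
      funext ξ3
      have hden : (0 : ℝ) ≤ (x1 - ξ1) ^ 2 + (x3 - ξ3) ^ 2 := by positivity
      rw [congrFun (hslice_eq ξ1) ξ3, Real.norm_eq_abs, abs_mul, abs_div,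
        abs_of_nonneg hden]
    rw [heq, integral_const_mul _ _, integral_sub_left_eq_self
      (fun t : ℝ => |x1 - ξ1| / ((x1 - ξ1) ^ 2 + t ^ 2)) volume x3, kval_abs ha]
    ring
  have hπd : Integrable (fun ξ1 : ℝ => π * |deriv φ ξ1|) := by
    simpa [Real.norm_eq_abs] using hdint.norm.const_mul π
  -- integrability on the plane
  have hint : Integrable f := by
    refine (integrable_prod_iff hmeas).2 ⟨ae_of_all _ hslice, ?_⟩
    exact hπd.congr hnorm.symm
  refine ⟨hint, ?_⟩
  -- Fubini
  rw [MeasureTheory.Measure.volume_eq_prod] at hint ⊢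
  rw [MeasureTheory.integral_prod _ hint]
  -- inner integral
  have hinner : ∀ ξ1 : ℝ, (∫ ξ3 : ℝ, f (ξ1, ξ3)) =
      (π * ((x1 - ξ1)⁻¹ * |x1 - ξ1|)) * deriv φ ξ1 := by
    intro ξ1
    rw [hslice_eq ξ1, integral_const_mul _ _, integral_sub_left_eq_self
      (fun t : ℝ => (x1 - ξ1) / ((x1 - ξ1) ^ 2 + t ^ 2)) volume x3, kval]
    ring
  simp_rw [hinner]
  set F : ℝ → ℝ := fun ξ1 => (π * ((x1 - ξ1)⁻¹ * |x1 - ξ1|)) * deriv φ ξ1 with hF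
  have hFint : Integrable F := by
    refine hdint.bdd_mul (c := π) ?_ (ae_of_all _ fun ξ1 => ?_)
    · apply Measurable.aestronglyMeasurable
      exact (measurable_const.mul
        (((measurable_const.sub measurable_id).inv).mul
          (measurable_const.sub measurable_id).abs))
    · rw [Real.norm_eq_abs, abs_mul, abs_of_nonneg Real.pi_pos.le]
      calc π * abs ((x1 - ξ1)⁻¹ * |x1 - ξ1|) ≤ π * 1 :=
            mul_le_mul_of_nonneg_left (sfac_abs_le _) Real.pi_pos.le
        _ = π := mul_one π
  rw [← intervalIntegral.integral_Iic_add_Ioi (b := x1) hFint.integrableOn hFint.integrableOn]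
  have hIic : (∫ ξ1 in Iic x1, F ξ1) = π * φ x1 := by
    have : ∀ᵐ ξ1 ∂(volume.restrict (Iic x1)), F ξ1 = π * deriv φ ξ1 := by
      filter_upwards [ae_restrict_mem measurableSet_Iic, ae_restrict_of_ae hae]
        with ξ1 hle hne
      have hpos : 0 < x1 - ξ1 := sub_pos.2 (lt_of_le_of_ne hle hne)
      rw [hF]
      simp only
      rw [abs_of_pos hpos, inv_mul_cancel₀ hpos.ne', mul_one]
    rw [integral_congr_ae this, integral_const_mul _ _,
      hsupp.integral_Iic_deriv_eq hφ x1]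
  have hIoi : (∫ ξ1 in Ioi x1, F ξ1) = π * φ x1 := by
    have : ∀ᵐ ξ1 ∂(volume.restrict (Ioi x1)), F ξ1 = -(π * deriv φ ξ1) := by
      filter_upwards [ae_restrict_mem measurableSet_Ioi] with ξ1 hlt
      have hneg : x1 - ξ1 < 0 := sub_neg.2 hlt
      rw [hF]
      simp only
      rw [abs_of_neg hneg, mul_neg, inv_mul_cancel₀ hneg.ne]
      ring
    rw [integral_congr_ae this, integral_neg, integral_const_mul _ _,
      hsupp.integral_Ioi_deriv_eq hφ x1]
    ring
  rw [hIic, hIoi]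
  ring
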